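/- Let A be a synaptic algebra, s and t symmetries, f a projection with tsfst < f, f₁ := f, f_{n+1} := ts f_n st, and e_n := f_n − f_{n+1}. Then each e_n is a nonzero projection below f, the family (e_n) is pairwise orthogonal, and for all n, ts e_n st = e_{n+1}. -/
import Mathlib


universe u

/-- A (partial axiomatization of a) synaptic algebra: a partially ordered real
vector subspace `A` of an associative unital algebra `R`, closed under squaring
and quadratic maps, in which the projections form an orthomodular lattice with
`p⊥ = 1 - p` and, for projections, `p ≤ q ↔ p * q = p ↔ q * p = p`. -/
structure Synaptic (R : Type u) [Ring R] [PartialOrder R] where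
  A : Set R
  one_mem : (1 : R) ∈ A
  add_mem : ∀ {a b : R}, a ∈ A → b ∈ A → a + b ∈ A
  neg_mem : ∀ {a : R}, a ∈ A → -a ∈ A
  sq_mem : ∀ {a : R}, a ∈ A → a * a ∈ A
  quad_mem : ∀ {a b : R}, a ∈ A → b ∈ A → a * b * a ∈ A
  add_le_add_right : ∀ {a b : R}, a ≤ b → ∀ c : R, a + c ≤ b + c
  sq_nonneg' : ∀ {a : R}, a ∈ A → 0 ≤ a * a
  quad_nonneg : ∀ {a b : R}, a ∈ A → b ∈ A → 0 ≤ b → 0 ≤ a * b * a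
  zero_lt_one' : (0 : R) < 1
  /-- for projections, the order is characterized multiplicatively -/
  proj_le_iff : ∀ {p q : R}, p ∈ A → p * p = p → q ∈ A → q * q = q →
    (p ≤ q ↔ p * q = p ∧ q * p = p)

namespace Synaptic

variable {R : Type u} [Ring R] [PartialOrder R] (S : Synaptic R)

/-- `p` is a projection of `A`. -/
def IsProj (p : R) : Prop := p ∈ S.A ∧ p * p = p

/-- `s` is a symmetry of `A`. -/
def IsSym (s : R) : Prop := s ∈ S.A ∧ s * s = 1

/-- `c` belongs to the center `C(A)` of `A`. -/
def Central (c : R) : Prop := c ∈ S.A ∧ ∀ a ∈ S.A, c * a = a * c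

/-- `c` is a central projection. -/
def IsCentralProj (c : R) : Prop := S.IsProj c ∧ S.Central c

/-- Equivalence of projections: `p ∼ q` iff there is a finite chain of
projections from `p` to `q` in which consecutive members are exchanged by a
symmetry of `A`. -/
def Equiv (p q : R) : Prop :=
  ∃ n : ℕ, ∃ e : ℕ → R, e 0 = p ∧ e n = q ∧ (∀ i ≤ n, S.IsProj (e i)) ∧
    ∀ i < n, ∃ s : R, S.IsSym s ∧ s * e i * s = e (i + 1)

/-- `p ⪯ q`: `p` is equivalent to a subprojection of `q`. -/
def SubEquiv (p q : R) : Prop := ∃ q₁ : R, S.IsProj q₁ ∧ q₁ ≤ q ∧ S.Equiv p q₁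

/-- `p` is the supremum, in the projection lattice `P`, of the set `F` of
projections. -/
def IsSupProj (F : Set R) (p : R) : Prop :=
  S.IsProj p ∧ (∀ q ∈ F, q ≤ p) ∧ ∀ r : R, S.IsProj r → (∀ q ∈ F, q ≤ r) → p ≤ r

/-- `p` is the infimum, in the projection lattice `P`, of the set `F` of
projections. -/
def IsInfProj (F : Set R) (p : R) : Prop :=
  S.IsProj p ∧ (∀ q ∈ F, p ≤ q) ∧ ∀ r : R, S.IsProj r → (∀ q ∈ F, r ≤ q) → r ≤ p

/-- `F` is a (pairwise) orthogonal set of projections. -/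
def OrthSet (F : Set R) : Prop :=
  (∀ p ∈ F, S.IsProj p) ∧ ∀ p ∈ F, ∀ q ∈ F, p ≠ q → p * q = 0

/-- `F` is a centrally orthogonal set of projections: its members are dominated
by a pairwise orthogonal family of central projections. -/
def CentOrthSet (F : Set R) : Prop :=
  (∀ p ∈ F, S.IsProj p) ∧ ∃ c : R → R,
    (∀ p ∈ F, S.IsCentralProj (c p) ∧ p ≤ c p) ∧
    ∀ p ∈ F, ∀ q ∈ F, p ≠ q → c p * c q = 0

/-- The projection lattice `P` is centrally orthocomplete. -/
def CentOrthocomplete : Prop :=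
  ∀ F : Set R, S.CentOrthSet F → ∃ p : R, S.IsSupProj F p

/-- The projection lattice `P` is complete. -/
def CompleteP : Prop :=
  ∀ F : Set R, (∀ p ∈ F, S.IsProj p) → ∃ p : R, S.IsSupProj F p

/-- `c` is the central cover `γ a` of `a`: the smallest central projection `c`
with `a * c = a`. -/
def IsCentralCover (a c : R) : Prop :=
  S.IsCentralProj c ∧ a * c = a ∧
    ∀ d : R, S.IsCentralProj d → a * d = a → c ≤ d

/-- `Q` is a type-determining (TD) set of projections: closed under suprema of
centrally orthogonal families and under meets (= products) with central
projections. -/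
def TD (Q : Set R) : Prop :=
  (∀ q ∈ Q, S.IsProj q) ∧
  (∀ F : Set R, F ⊆ Q → S.CentOrthSet F → ∀ p : R, S.IsSupProj F p → p ∈ Q) ∧
  (∀ q ∈ Q, ∀ c : R, S.IsCentralProj c → q * c ∈ Q)

/-- `Q` is projective: closed under equivalence of projections. -/
def Projective (Q : Set R) : Prop :=
  ∀ p q : R, q ∈ Q → S.Equiv p q → p ∈ Q

/-- `Q` is downward closed (`Q↓ ⊆ Q`). -/
def DownwardClosed (Q : Set R) : Prop :=
  ∀ q ∈ Q, ∀ p : R, S.IsProj p → p ≤ q → p ∈ Q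

/-- The projection `p` is modular: the interval OML `P[0,p]` satisfies the
modular law (stated relationally via suprema and infima in `P`, which agree
with those computed in `P[0,p]`). -/
def ModularProj (p : R) : Prop :=
  S.IsProj p ∧ ∀ a b c : R, S.IsProj a → S.IsProj b → S.IsProj c →
    a ≤ p → b ≤ p → c ≤ p → a ≤ c →
    ∀ i s j m : R, S.IsInfProj {b, c} i → S.IsSupProj {a, i} s →
      S.IsSupProj {a, b} j → S.IsInfProj {j, c} m → s = m

/-- `p` and `q` are perspective in the interval `P[0,r]`: they have a common
complement `x` there. -/
def PerspectiveIn (r p q : R) : Prop :=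
  ∃ x : R, S.IsProj x ∧ x ≤ r ∧ S.IsSupProj {p, x} r ∧ S.IsSupProj {q, x} r ∧
    S.IsInfProj {p, x} 0 ∧ S.IsInfProj {q, x} 0

end Synaptic

/-- With `s, t` symmetries, `f` a projection with `tsfst < f`, `f₁ := f`,
`fₙ₊₁ := ts fₙ st`, and `eₙ := fₙ − fₙ₊₁`: each `eₙ` is a nonzero projection
below `f`, the family `(eₙ)` is pairwise orthogonal, and `ts eₙ st = eₙ₊₁`. -/
theorem difference_sequence_orthogonal {R : Type u} [Ring R] [PartialOrder R]
    (S : Synaptic R) (s t f : R) (hs : S.IsSym s) (ht : S.IsSym t)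
    (hf : S.IsProj f) (hlt : t * s * f * s * t < f)
    (g : ℕ → R) (hg0 : g 0 = f) (hgs : ∀ n, g (n + 1) = t * s * g n * s * t)
    (e : ℕ → R) (he : ∀ n, e n = g n - g (n + 1)) :
    (∀ n, S.IsProj (e n) ∧ e n ≠ 0 ∧ e n ≤ f) ∧
    (∀ m n, m ≠ n → e m * e n = 0) ∧
    (∀ n, t * s * e n * s * t = e (n + 1)) := by
  obtain ⟨hsA, hs2⟩ := hs
  obtain ⟨htA, ht2⟩ := ht
  have hs' : ∀ x : R, s * (s * x) = x := fun x => by rw [← mul_assoc, hs2, one_mul]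
  have ht' : ∀ x : R, t * (t * x) = x := fun x => by rw [← mul_assoc, ht2, one_mul]
  -- conjugation preserves membership
  have conj_mem : ∀ {a : R}, a ∈ S.A → t * s * a * s * t ∈ S.A := by
    intro a ha
    have h1 : s * a * s ∈ S.A := S.quad_mem hsA ha
    have h2 : t * (s * a * s) * t ∈ S.A := S.quad_mem htA h1
    have : t * (s * a * s) * t = t * s * a * s * t := by noncomm_ring
    rwa [this] at h2
  -- conjugation preserves ≤
  have conj_le : ∀ {a b : R}, a ∈ S.A → b ∈ S.A → a ≤ b →
      t * s * a * s * t ≤ t * s * b * s * t := by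
    intro a b ha hb hab
    have h0 : (0:R) ≤ b - a := by
      have := S.add_le_add_right hab (-a)
      simpa [sub_eq_add_neg] using this
    have hba : b - a ∈ S.A := by
      rw [sub_eq_add_neg]; exact S.add_mem hb (S.neg_mem ha)
    have h1 : (0:R) ≤ s * (b - a) * s := S.quad_nonneg hsA hba h0
    have hs1 : s * (b - a) * s ∈ S.A := S.quad_mem hsA hba
    have h2 : (0:R) ≤ t * (s * (b - a) * s) * t := S.quad_nonneg htA hs1 h1
    have key : t * (s * (b - a) * s) * t = t * s * b * s * t - t * s * a * s * t := by
      noncomm_ring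
    rw [key] at h2
    have := S.add_le_add_right h2 (t * s * a * s * t)
    simpa using this
  -- conjugation is injective
  have conj_inj : ∀ {a b : R}, t * s * a * s * t = t * s * b * s * t → a = b := by
    intro a b h
    have cancel : ∀ x : R, s * (t * (t * s * x * s * t) * t) * s = x := by
      intro x
      simp only [mul_assoc, ht', hs', hs2, ht2, mul_one]
    have := congrArg (fun x => s * (t * x * t) * s) h
    simpa [cancel] using this
  have conj_lt : ∀ {a b : R}, a ∈ S.A → b ∈ S.A → a < b →
      t * s * a * s * t < t * s * b * s * t := by
    intro a b ha hb hab
    exact lt_of_le_of_ne (conj_le ha hb hab.le) (fun h => hab.ne (conj_inj h))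
  -- g n facts
  have gA : ∀ n, g n ∈ S.A := by
    intro n; induction n with
    | zero => rw [hg0]; exact hf.1
    | succ k ih => rw [hgs k]; exact conj_mem ih
  have gP : ∀ n, g n * g n = g n := by
    intro n; induction n with
    | zero => rw [hg0]; exact hf.2
    | succ k ih =>
      rw [hgs k]
      have hgk : ∀ x : R, g k * (g k * x) = g k * x := fun x => by
        rw [← mul_assoc, ih]
      simp only [mul_assoc, ht', hs', hgk]
  have hdec : ∀ n, g (n + 1) < g n := by
    intro n; induction n with
    | zero => rw [hgs 0, hg0]; exact hlt
    | succ k ih =>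
      have h2 := conj_lt (gA (k + 1)) (gA k) ih
      rwa [← hgs (k + 1), ← hgs k] at h2
  have hle : ∀ m n, m ≤ n → g n ≤ g m := by
    intro m n h
    induction h with
    | refl => exact le_refl _
    | step _ ih => exact (hdec _).le.trans ih
  -- multiplicative consequences of order for projections
  have hmul : ∀ m n, m ≤ n → g n * g m = g n ∧ g m * g n = g n := by
    intro m n h
    exact (S.proj_le_iff (gA n) (gP n) (gA m) (gP m)).mp (hle m n h)
  -- e n is a projection
  have eA : ∀ n, e n ∈ S.A := by
    intro n; rw [he n, sub_eq_add_neg]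
    exact S.add_mem (gA n) (S.neg_mem (gA (n + 1)))
  have eP : ∀ n, e n * e n = e n := by
    intro n
    obtain ⟨h1, h2⟩ := hmul n (n + 1) (Nat.le_succ n)
    rw [he n, sub_mul, mul_sub, mul_sub, gP n, gP (n + 1), h1, h2]
    abel
  have eNe : ∀ n, e n ≠ 0 := by
    intro n
    rw [he n]
    exact sub_ne_zero.mpr (hdec n).ne'
  have eLe : ∀ n, e n ≤ f := by
    intro n
    have hle_gn : e n ≤ g n := by
      apply (S.proj_le_iff (eA n) (eP n) (gA n) (gP n)).mpr
      obtain ⟨h1, h2⟩ := hmul n (n + 1) (Nat.le_succ n)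
      constructor
      · rw [he n, sub_mul, gP n, h1]
      · rw [he n, mul_sub, gP n, h2]
    have := hle 0 n (Nat.zero_le n)
    rw [hg0] at this
    exact hle_gn.trans this
  -- orthogonality
  have orth : ∀ m n, m < n → e m * e n = 0 ∧ e n * e m = 0 := by
    intro m n h
    have h1 : m + 1 ≤ n := h
    have hna : g n * g m = g n := (hmul m n h.le).1
    have hna' : g m * g n = g n := (hmul m n h.le).2
    have hnb : g n * g (m + 1) = g n := (hmul (m + 1) n h1).1
    have hnb' : g (m + 1) * g n = g n := (hmul (m + 1) n h1).2
    have hda : g (n + 1) * g m = g (n + 1) := (hmul m (n + 1) (h.le.trans (Nat.le_succ n))).1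
    have hda' : g m * g (n + 1) = g (n + 1) := (hmul m (n + 1) (h.le.trans (Nat.le_succ n))).2
    have hdb : g (n + 1) * g (m + 1) = g (n + 1) := (hmul (m + 1) (n + 1) (h1.trans (Nat.le_succ n))).1
    have hdb' : g (m + 1) * g (n + 1) = g (n + 1) := (hmul (m + 1) (n + 1) (h1.trans (Nat.le_succ n))).2
    constructor
    · rw [he m, he n, sub_mul, mul_sub, mul_sub, hna', hnb', hda', hdb']
      abel
    · rw [he m, he n, sub_mul, mul_sub, mul_sub, hna, hnb, hda, hdb]
      abel
  refine ⟨fun n => ⟨⟨eA n, eP n⟩, eNe n, eLe n⟩, ?_, ?_⟩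
  · intro m n hmn
    rcases lt_or_gt_of_ne hmn with h | h
    · exact (orth m n h).1
    · exact (orth n m h).2
  · intro n
    rw [he n, he (n + 1), hgs (n + 1), hgs n]
    noncomm_ring
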